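/- If p and q are coprime integers with 0 < q < p, then |p, p−q| = |p, q|. -/
import Mathlib


/-- The complexity `|p,q|` of a coprime pair of integers, defined recursively by
`|±1,0| = |0,±1| = |1,1| = 0`, `|p,q| = 1 + |p,q-p|` if `q > p > 0`,
`|p,q| = 1 + |p-q,q|` if `p > q > 0`, `|p,q| = |p,-q| + 1` if `p > 0 > q`, and
`|p,q| = |-p,-q|` if `p < 0` and `q ≠ 0`. -/
def pqComplexity (p q : ℤ) : ℕ :=
  if h1 : p < 0 then
    if q = 0 then 0 else pqComplexity (-p) (-q)
  else if h2 : p = 0 then 0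
  else
    if h3 : q < 0 then pqComplexity p (-q) + 1
    else if h4 : q = 0 then 0
    else
      if h5 : p < q then 1 + pqComplexity p (q - p)
      else if h6 : q < p then 1 + pqComplexity (p - q) q
      else 0
termination_by 3 * (p.natAbs + q.natAbs) + (if p < 0 then 2 else if q < 0 then 1 else 0)
decreasing_by
  all_goals (split_ifs <;> omega)

/-- Unfolding lemma for positive arguments. -/
lemma pq_pos (a b : ℤ) (ha : 0 < a) (hb : 0 < b) :
    pqComplexity a b = if a < b then 1 + pqComplexity a (b - a)
      else if b < a then 1 + pqComplexity (a - b) b else 0 := by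
  rw [pqComplexity]
  simp only [dif_neg (by omega : ¬ a < 0), dif_neg (by omega : a ≠ 0),
    dif_neg (by omega : ¬ b < 0), dif_neg (by omega : b ≠ 0)]
  split_ifs <;> rfl

/-- The complexity is symmetric for positive arguments. -/
lemma pq_symm : ∀ n : ℕ, ∀ a b : ℤ, a.natAbs + b.natAbs ≤ n → 0 < a → 0 < b →
    pqComplexity a b = pqComplexity b a := by
  intro n
  induction n with
  | zero => intro a b h ha hb; omega
  | succ n ih =>
    intro a b h ha hb
    rw [pq_pos a b ha hb, pq_pos b a hb ha]
    rcases lt_trichotomy a b with hab | hab | hab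
    · rw [if_pos hab, if_neg (by omega), if_pos hab,
        ih a (b - a) (by omega) ha (by omega)]
    · simp [hab]
    · rw [if_neg (by omega), if_pos hab, if_pos hab,
        ih (a - b) b (by omega) (by omega) hb]

/-- If `p` and `q` are coprime integers with `0 < q < p`, then `|p, p-q| = |p,q|`. -/
theorem pqComplexity_sub (p q : ℤ) (hq : 0 < q) (hqp : q < p) (h : Int.gcd p q = 1) :
    pqComplexity p (p - q) = pqComplexity p q := by
  rw [pq_pos p (p - q) (by omega) (by omega), pq_pos p q (by omega) hq,
    if_neg (by omega : ¬ p < p - q), if_pos (by omega : p - q < p),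
    if_neg (by omega : ¬ p < q), if_pos hqp]
  have : p - (p - q) = q := by ring
  rw [this, pq_symm (q.natAbs + (p - q).natAbs) q (p - q) le_rfl hq (by omega)]
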